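/- Under the conditions β < 1 and b_q < ∞, the Q-process satisfies E[W(n)] = 1 + γ_q·(1 − β^n) for every n ≥ 0. -/

import Mathlib

open MeasureTheory ProbabilityTheory Filter Topology Finset
open scoped NNReal ENNReal


private def convSeq (x y : ℕ → ℝ) : ℕ → ℝ := fun n =>
  ∑ kl ∈ Finset.HasAntidiagonal.antidiagonal n, x kl.1 * y kl.2

private def convPow (p : ℕ → ℝ) : ℕ → ℕ → ℝ
  | 0 => fun j => if j = 0 then 1 else 0
  | i + 1 => convSeq (convPow p i) p

private lemma convSeq_nonneg {x y : ℕ → ℝ} (hx : ∀ n, 0 ≤ x n) (hy : ∀ n, 0 ≤ y n) (n : ℕ) :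
    0 ≤ convSeq x y n :=
  Finset.sum_nonneg fun kl _ => mul_nonneg (hx _) (hy _)

private lemma convPow_nonneg {p : ℕ → ℝ} (hp : ∀ n, 0 ≤ p n) (i : ℕ) (j : ℕ) :
    0 ≤ convPow p i j := by
  induction i generalizing j with
  | zero => simp only [convPow]; positivity
  | succ i ih => exact convSeq_nonneg ih hp j

private lemma convSeq_pow_mul (x y : ℕ → ℝ) (s : ℝ) (n : ℕ) :
    convSeq x y n * s ^ n =
      convSeq (fun a => x a * s ^ a) (fun b => y b * s ^ b) n := by
  unfold convSeq
  rw [Finset.sum_mul]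
  refine Finset.sum_congr rfl fun kl hkl => ?_
  have h := Finset.HasAntidiagonal.mem_antidiagonal.mp hkl
  rw [← h, pow_add]; ring

private lemma convSeq_cauchy {x y : ℕ → ℝ} (hx0 : ∀ n, 0 ≤ x n) (hy0 : ∀ n, 0 ≤ y n)
    (hx : Summable x) (hy : Summable y) :
    Summable (convSeq x y) ∧ ∑' n : ℕ, convSeq x y n = (∑' n : ℕ, x n) * (∑' n : ℕ, y n) := by
  have hx' : Summable fun n => ‖x n‖ := by
    simpa [Real.norm_eq_abs, abs_of_nonneg (hx0 _)] using hx
  have hy' : Summable fun n => ‖y n‖ := by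
    simpa [Real.norm_eq_abs, abs_of_nonneg (hy0 _)] using hy
  exact ⟨(summable_norm_sum_mul_antidiagonal_of_summable_norm hx' hy').of_norm,
    (tsum_mul_tsum_eq_tsum_sum_antidiagonal_of_summable_norm hx' hy').symm⟩

private lemma convSeq_weight1 (x y : ℕ → ℝ) (n : ℕ) :
    (n : ℝ) * convSeq x y n =
      convSeq (fun a => (a : ℝ) * x a) y n + convSeq x (fun b => (b : ℝ) * y b) n := by
  unfold convSeq
  rw [Finset.mul_sum, ← Finset.sum_add_distrib]
  refine Finset.sum_congr rfl fun kl hkl => ?_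
  have h := Finset.HasAntidiagonal.mem_antidiagonal.mp hkl
  rw [← h]; push_cast; ring

private lemma convSeq_weight2 (x y : ℕ → ℝ) (n : ℕ) :
    (n : ℝ) ^ 2 * convSeq x y n =
      convSeq (fun a => (a : ℝ) ^ 2 * x a) y n +
        (2 * convSeq (fun a => (a : ℝ) * x a) (fun b => (b : ℝ) * y b) n +
          convSeq x (fun b => (b : ℝ) ^ 2 * y b) n) := by
  unfold convSeq
  rw [Finset.mul_sum, Finset.mul_sum, ← Finset.sum_add_distrib, ← Finset.sum_add_distrib]
  refine Finset.sum_congr rfl fun kl hkl => ?_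
  have h := Finset.HasAntidiagonal.mem_antidiagonal.mp hkl
  rw [← h]; push_cast; ring

private lemma convSeq_moments {x y : ℕ → ℝ} (hx0 : ∀ n, 0 ≤ x n) (hy0 : ∀ n, 0 ≤ y n)
    (hx0s : Summable x) (hx1s : Summable fun n : ℕ => (n : ℝ) * x n)
    (hx2s : Summable fun n : ℕ => (n : ℝ) ^ 2 * x n)
    (hy0s : Summable y) (hy1s : Summable fun n : ℕ => (n : ℝ) * y n)
    (hy2s : Summable fun n : ℕ => (n : ℝ) ^ 2 * y n) :
    (Summable (convSeq x y) ∧ Summable (fun n : ℕ => (n : ℝ) * convSeq x y n) ∧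
      Summable (fun n : ℕ => (n : ℝ) ^ 2 * convSeq x y n)) ∧
    (∑' n : ℕ, convSeq x y n) = (∑' n : ℕ, x n) * (∑' n : ℕ, y n) ∧
    (∑' n : ℕ, (n : ℝ) * convSeq x y n) =
      (∑' n : ℕ, (n : ℝ) * x n) * (∑' n : ℕ, y n) + (∑' n : ℕ, x n) * (∑' n : ℕ, (n : ℝ) * y n) ∧
    (∑' n : ℕ, (n : ℝ) ^ 2 * convSeq x y n) =
      (∑' n : ℕ, (n : ℝ) ^ 2 * x n) * (∑' n : ℕ, y n) +
        (2 * ((∑' n : ℕ, (n : ℝ) * x n) * (∑' n : ℕ, (n : ℝ) * y n)) +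
          (∑' n : ℕ, x n) * (∑' n : ℕ, (n : ℝ) ^ 2 * y n)) := by
  have nx1 : ∀ n : ℕ, 0 ≤ (n : ℝ) * x n := fun n => mul_nonneg (Nat.cast_nonneg n) (hx0 n)
  have ny1 : ∀ n : ℕ, 0 ≤ (n : ℝ) * y n := fun n => mul_nonneg (Nat.cast_nonneg n) (hy0 n)
  have nx2 : ∀ n : ℕ, 0 ≤ (n : ℝ) ^ 2 * x n := fun n => mul_nonneg (by positivity) (hx0 n)
  have ny2 : ∀ n : ℕ, 0 ≤ (n : ℝ) ^ 2 * y n := fun n => mul_nonneg (by positivity) (hy0 n)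
  obtain ⟨s00, t00⟩ := convSeq_cauchy hx0 hy0 hx0s hy0s
  obtain ⟨s10, t10⟩ := convSeq_cauchy nx1 hy0 hx1s hy0s
  obtain ⟨s01, t01⟩ := convSeq_cauchy hx0 ny1 hx0s hy1s
  obtain ⟨s20, t20⟩ := convSeq_cauchy nx2 hy0 hx2s hy0s
  obtain ⟨s11, t11⟩ := convSeq_cauchy nx1 ny1 hx1s hy1s
  obtain ⟨s02, t02⟩ := convSeq_cauchy hx0 ny2 hx0s hy2s
  have e1 : (fun n : ℕ => (n : ℝ) * convSeq x y n) =
      fun n => convSeq (fun a => (a : ℝ) * x a) y n + convSeq x (fun b => (b : ℝ) * y b) n :=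
    funext fun n => convSeq_weight1 x y n
  have e2 : (fun n : ℕ => (n : ℝ) ^ 2 * convSeq x y n) =
      fun n => convSeq (fun a => (a : ℝ) ^ 2 * x a) y n +
        (2 * convSeq (fun a => (a : ℝ) * x a) (fun b => (b : ℝ) * y b) n +
          convSeq x (fun b => (b : ℝ) ^ 2 * y b) n) :=
    funext fun n => convSeq_weight2 x y n
  have S1 : Summable (fun n : ℕ => (n : ℝ) * convSeq x y n) := by
    rw [e1]; exact s10.add s01
  have S2 : Summable (fun n : ℕ => (n : ℝ) ^ 2 * convSeq x y n) := by
    rw [e2]; exact s20.add ((s11.mul_left 2).add s02)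
  refine ⟨⟨s00, S1, S2⟩, t00, ?_, ?_⟩
  · rw [e1, Summable.tsum_add s10 s01, t10, t01]
  · rw [e2, Summable.tsum_add s20 ((s11.mul_left 2).add s02),
      Summable.tsum_add (s11.mul_left 2) s02, tsum_mul_left, t20, t11, t02]

private lemma convPow_zero_mul (p : ℕ → ℝ) (s : ℝ) (j : ℕ) :
    convPow p 0 j * s ^ j = if j = 0 then (1 : ℝ) else 0 := by
  by_cases h : j = 0 <;> simp [convPow, h]

private lemma convPow_succ_mul (p : ℕ → ℝ) (s : ℝ) (i : ℕ) (j : ℕ) :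
    convPow p (i + 1) j * s ^ j =
      convSeq (fun a => convPow p i a * s ^ a) (fun b => p b * s ^ b) j := by
  show convSeq (convPow p i) p j * s ^ j = _
  rw [convSeq_pow_mul]

private lemma indicator_summable : Summable (fun j : ℕ => if j = 0 then (1 : ℝ) else 0) := by
  apply summable_of_ne_finset_zero (s := {0})
  intro b hb
  simp at hb
  simp [hb]

private lemma convPow_moments (p : ℕ → ℝ) (q β bq : ℝ)
    (hp0 : ∀ k, 0 ≤ p k) (hq0 : 0 ≤ q)
    (S0 : Summable fun k : ℕ => p k * q ^ k)
    (S1 : Summable fun k : ℕ => (k : ℝ) * (p k * q ^ k))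
    (S2 : Summable fun k : ℕ => (k : ℝ) ^ 2 * (p k * q ^ k))
    (T0 : ∑' k : ℕ, p k * q ^ k = q)
    (T1 : ∑' k : ℕ, (k : ℝ) * (p k * q ^ k) = β * q)
    (T2 : ∑' k : ℕ, (k : ℝ) ^ 2 * (p k * q ^ k) = q * bq + q * β) :
    ∀ i : ℕ,
      (Summable (fun j => convPow p i j * q ^ j) ∧
        Summable (fun j : ℕ => (j : ℝ) * (convPow p i j * q ^ j)) ∧
        Summable (fun j : ℕ => (j : ℝ) ^ 2 * (convPow p i j * q ^ j))) ∧
      (∑' j : ℕ, convPow p i j * q ^ j) = q ^ i ∧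
      (∑' j : ℕ, (j : ℝ) * (convPow p i j * q ^ j)) = (i : ℝ) * β * q ^ i ∧
      (∑' j : ℕ, (j : ℝ) ^ 2 * (convPow p i j * q ^ j)) =
        q ^ i * ((i : ℝ) * β + (i : ℝ) * ((i : ℝ) - 1) * β ^ 2 + (i : ℝ) * bq) := by
  intro i
  induction i with
  | zero =>
    simp only [convPow_zero_mul]
    have e1 : (fun j : ℕ => (j : ℝ) * (if j = 0 then (1 : ℝ) else 0)) = fun _ => (0 : ℝ) := by
      funext j; by_cases h : j = 0 <;> simp [h]
    have e2 : (fun j : ℕ => (j : ℝ) ^ 2 * (if j = 0 then (1 : ℝ) else 0)) = fun _ => (0 : ℝ) := by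
      funext j; by_cases h : j = 0 <;> simp [h]
    refine ⟨⟨indicator_summable, ?_, ?_⟩, ?_, ?_, ?_⟩
    · rw [e1]; exact summable_zero
    · rw [e2]; exact summable_zero
    · rw [tsum_eq_single 0 (fun b hb => by simp [hb])]; simp
    · rw [e1]; simp
    · rw [e2]; simp
  | succ i ih =>
    obtain ⟨⟨s0, s1, s2⟩, t0, t1, t2⟩ := ih
    have hx0 : ∀ n, 0 ≤ convPow p i n * q ^ n :=
      fun n => mul_nonneg (convPow_nonneg hp0 i n) (pow_nonneg hq0 n)
    have hy0 : ∀ n, 0 ≤ p n * q ^ n := fun n => mul_nonneg (hp0 n) (pow_nonneg hq0 n)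
    obtain ⟨⟨S0', S1', S2'⟩, T0', T1', T2'⟩ :=
      convSeq_moments hx0 hy0 s0 s1 s2 S0 S1 S2
    simp only [convPow_succ_mul]
    refine ⟨⟨S0', S1', S2'⟩, ?_, ?_, ?_⟩
    · rw [T0', t0, T0, pow_succ]
    · rw [T1', t0, t1, T0, T1]; push_cast; ring
    · rw [T2', t0, t1, t2, T0, T1, T2]; push_cast; ring

private lemma convPow_tsum_pow (p : ℕ → ℝ) (hp0 : ∀ k, 0 ≤ p k) (Sp : Summable p) (i : ℕ) :
    ∀ s : ℝ, s ∈ Set.Ioo (0 : ℝ) 1 →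
      Summable (fun j => convPow p i j * s ^ j) ∧
        (∑' j : ℕ, convPow p i j * s ^ j) = (∑' k : ℕ, p k * s ^ k) ^ i := by
  induction i with
  | zero =>
    intro s hs
    simp only [convPow_zero_mul]
    exact ⟨indicator_summable, by rw [tsum_eq_single 0 (fun b hb => by simp [hb])]; simp⟩
  | succ i ih =>
    intro s hs
    obtain ⟨s0, t0⟩ := ih s hs
    have hx0 : ∀ n, 0 ≤ convPow p i n * s ^ n :=
      fun n => mul_nonneg (convPow_nonneg hp0 i n) (pow_nonneg hs.1.le n)
    have hy0 : ∀ n, 0 ≤ p n * s ^ n := fun n => mul_nonneg (hp0 n) (pow_nonneg hs.1.le n)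
    have Sps : Summable fun k : ℕ => p k * s ^ k := by
      refine Sp.of_nonneg_of_le hy0 fun k => ?_
      calc p k * s ^ k ≤ p k * 1 := by
            apply mul_le_mul_of_nonneg_left _ (hp0 k)
            exact pow_le_one₀ hs.1.le hs.2.le
        _ = p k := mul_one _
    obtain ⟨Sc, Tc⟩ := convSeq_cauchy hx0 hy0 s0 Sps
    simp only [convPow_succ_mul]
    exact ⟨Sc, by rw [Tc, t0, pow_succ]⟩

set_option maxHeartbeats 1000000 in
private lemma tsum_head_bound {a : ℕ → ℝ} (ha : ∀ j, 0 ≤ a j)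
    (hs : ∀ s : ℝ, s ∈ Set.Ioo (0 : ℝ) 1 → Summable fun j => a j * s ^ j) :
    ∃ K : ℝ, 0 ≤ K ∧ ∀ s : ℝ, s ∈ Set.Ioo (0 : ℝ) 1 → s ≤ 1 / 2 →
      a 0 ≤ (∑' j : ℕ, a j * s ^ j) ∧ (∑' j : ℕ, a j * s ^ j) ≤ a 0 + s * K := by
  have hhalf : Summable fun j => a j * (1 / 2 : ℝ) ^ j :=
    hs (1 / 2) (by norm_num)
  have hshift : Summable fun j => a (j + 1) * (1 / 2 : ℝ) ^ (j + 1) :=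
    (summable_nat_add_iff 1).2 hhalf
  have hK : Summable fun j => a (j + 1) * (1 / 2 : ℝ) ^ j := by
    have := hshift.mul_left 2
    refine this.congr fun j => ?_
    ring
  refine ⟨∑' j : ℕ, a (j + 1) * (1 / 2 : ℝ) ^ j,
    tsum_nonneg fun j => mul_nonneg (ha _) (by positivity), fun s hs' hs2 => ?_⟩
  have hsum := hs s hs'
  have hpos : 0 < s := hs'.1
  have hshift' : Summable fun j => a (j + 1) * s ^ (j + 1) := (summable_nat_add_iff 1).2 hsum
  have hsplit : (∑' j : ℕ, a j * s ^ j) = a 0 + ∑' j : ℕ, a (j + 1) * s ^ (j + 1) := by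
    rw [Summable.tsum_eq_zero_add hsum]; simp
  constructor
  · rw [hsplit]
    have : 0 ≤ ∑' j : ℕ, a (j + 1) * s ^ (j + 1) :=
      tsum_nonneg fun j => mul_nonneg (ha _) (by positivity)
    linarith
  · rw [hsplit]
    have hle : ∀ j : ℕ, a (j + 1) * s ^ (j + 1) ≤ s * (a (j + 1) * (1 / 2 : ℝ) ^ j) := by
      intro j
      have h2 : s ^ j ≤ (1 / 2 : ℝ) ^ j := pow_le_pow_left₀ (le_of_lt hpos) hs2 j
      calc a (j + 1) * s ^ (j + 1) = s * (a (j + 1) * s ^ j) := by ring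
        _ ≤ s * (a (j + 1) * (1 / 2 : ℝ) ^ j) := by
            apply mul_le_mul_of_nonneg_left _ hpos.le
            exact mul_le_mul_of_nonneg_left h2 (ha _)
    have := Summable.tsum_le_tsum hle hshift' (hK.mul_left s)
    rw [tsum_mul_left] at this
    linarith
private lemma coeff_zero_unique {a b : ℕ → ℝ} (ha : ∀ j, 0 ≤ a j) (hb : ∀ j, 0 ≤ b j)
    (hsa : ∀ s : ℝ, s ∈ Set.Ioo (0 : ℝ) 1 → Summable fun j => a j * s ^ j)
    (hsb : ∀ s : ℝ, s ∈ Set.Ioo (0 : ℝ) 1 → Summable fun j => b j * s ^ j)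
    (heq : ∀ s ∈ Set.Ioo (0 : ℝ) 1, ∑' j : ℕ, a j * s ^ j = ∑' j : ℕ, b j * s ^ j) :
    a 0 = b 0 := by
  obtain ⟨Ka, hKa0, hKa⟩ := tsum_head_bound ha hsa
  obtain ⟨Kb, hKb0, hKb⟩ := tsum_head_bound hb hsb
  have key : ∀ ε : ℝ, 0 < ε → |a 0 - b 0| ≤ 0 + ε := by
    intro ε hε
    set s : ℝ := min (1 / 2) (ε / (Ka + Kb + 1)) with hs_def
    have hspos : 0 < s := lt_min (by norm_num) (by positivity)
    have hs2 : s ≤ 1 / 2 := min_le_left _ _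
    have hs1 : s ∈ Set.Ioo (0 : ℝ) 1 := ⟨hspos, lt_of_le_of_lt hs2 (by norm_num)⟩
    obtain ⟨ha1, ha2⟩ := hKa s hs1 hs2
    obtain ⟨hb1, hb2⟩ := hKb s hs1 hs2
    have he := heq s hs1
    have h1 : a 0 - b 0 ≤ s * Kb := by linarith
    have h2 : b 0 - a 0 ≤ s * Ka := by linarith
    have hsK : s * (Ka + Kb) ≤ ε := by
      have hle : s ≤ ε / (Ka + Kb + 1) := min_le_right _ _
      have h3 : s * (Ka + Kb) ≤ (ε / (Ka + Kb + 1)) * (Ka + Kb) := by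
        apply mul_le_mul_of_nonneg_right hle (by linarith)
      have h4 : (ε / (Ka + Kb + 1)) * (Ka + Kb) ≤ ε := by
        rw [div_mul_eq_mul_div, div_le_iff₀ (by linarith)]
        nlinarith
      linarith
    rw [abs_sub_le_iff]
    constructor <;> nlinarith [mul_nonneg hspos.le hKa0, mul_nonneg hspos.le hKb0]
  have := le_of_forall_pos_le_add key
  have : |a 0 - b 0| = 0 := le_antisymm (by simpa using this) (abs_nonneg _)
  have := abs_eq_zero.mp this
  linarith

private lemma coeff_unique {a b : ℕ → ℝ} (ha : ∀ j, 0 ≤ a j) (hb : ∀ j, 0 ≤ b j)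
    (hsa : ∀ s : ℝ, s ∈ Set.Ioo (0 : ℝ) 1 → Summable fun j => a j * s ^ j)
    (hsb : ∀ s : ℝ, s ∈ Set.Ioo (0 : ℝ) 1 → Summable fun j => b j * s ^ j)
    (heq : ∀ s ∈ Set.Ioo (0 : ℝ) 1, ∑' j : ℕ, a j * s ^ j = ∑' j : ℕ, b j * s ^ j) :
    ∀ m, a m = b m := by
  intro m
  induction m generalizing a b with
  | zero => exact coeff_zero_unique ha hb hsa hsb heq
  | succ m ih =>
    have h0 : a 0 = b 0 := coeff_zero_unique ha hb hsa hsb heq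
    have shift_summable : ∀ {c : ℕ → ℝ},
        (∀ s : ℝ, s ∈ Set.Ioo (0 : ℝ) 1 → Summable fun j => c j * s ^ j) →
        ∀ s : ℝ, s ∈ Set.Ioo (0 : ℝ) 1 → Summable fun j => c (j + 1) * s ^ j := by
      intro c hc s hs
      have h1 : Summable fun j => c (j + 1) * s ^ (j + 1) := (summable_nat_add_iff 1).2 (hc s hs)
      have h2 : Summable fun j => s * (c (j + 1) * s ^ j) := by
        refine h1.congr fun j => ?_; ring
      exact (summable_mul_left_iff (ne_of_gt hs.1)).1 h2
    have shift_tsum : ∀ {c : ℕ → ℝ},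
        (∀ s : ℝ, s ∈ Set.Ioo (0 : ℝ) 1 → Summable fun j => c j * s ^ j) →
        ∀ s : ℝ, s ∈ Set.Ioo (0 : ℝ) 1 →
          ∑' j : ℕ, c j * s ^ j = c 0 + s * ∑' j : ℕ, c (j + 1) * s ^ j := by
      intro c hc s hs
      rw [Summable.tsum_eq_zero_add (hc s hs)]
      congr 1
      · simp
      · rw [← tsum_mul_left]
        refine tsum_congr fun j => ?_; ring
    refine ih (fun j => ha (j + 1)) (fun j => hb (j + 1))
      (shift_summable hsa) (shift_summable hsb) (fun s hs => ?_)
    have he := heq s hs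
    rw [shift_tsum hsa s hs, shift_tsum hsb s hs, h0] at he
    have := add_left_cancel he
    exact mul_left_cancel₀ (ne_of_gt hs.1) this

private noncomputable def Qker (P : ℕ → ℕ → ℝ) (q β : ℝ) (a b : ℕ) : ℝ :=
  (b : ℝ) * q ^ ((b : ℤ) - (a : ℤ)) / ((a : ℝ) * β) * P a b

private noncomputable def Rpath (P : ℕ → ℕ → ℝ) (q β : ℝ) (n : ℕ) (i : ℕ → ℕ) : ℝ :=
  (if i 0 = 1 then (1 : ℝ) else 0) * ∏ k ∈ Finset.range n, Qker P q β (i k) (i (k + 1))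

private lemma Qker_nonneg {P : ℕ → ℕ → ℝ} {q β : ℝ} (hP : ∀ a b, 0 ≤ P a b)
    (hq : 0 ≤ q) (hβ : 0 ≤ β) (a b : ℕ) : 0 ≤ Qker P q β a b :=
  mul_nonneg (div_nonneg (mul_nonneg (Nat.cast_nonneg b) (zpow_nonneg hq _))
    (mul_nonneg (Nat.cast_nonneg a) hβ)) (hP a b)

private lemma Rpath_nonneg {P : ℕ → ℕ → ℝ} {q β : ℝ} (hP : ∀ a b, 0 ≤ P a b)
    (hq : 0 ≤ q) (hβ : 0 ≤ β) (n : ℕ) (i : ℕ → ℕ) : 0 ≤ Rpath P q β n i := by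
  apply mul_nonneg
  · split <;> norm_num
  · exact Finset.prod_nonneg fun k _ => Qker_nonneg hP hq hβ _ _

private def extd (n : ℕ) (v : Fin (n + 1) → ℕ) (k : ℕ) : ℕ :=
  if h : k < n + 1 then v ⟨k, h⟩ else 1

private lemma extd_lt (n : ℕ) (v : Fin (n + 1) → ℕ) (k : ℕ) (h : k < n + 1) :
    extd n v k = v ⟨k, h⟩ := dif_pos h

private lemma extd_one_le (n : ℕ) (v : Fin (n + 1) → ℕ) (hv : ∀ k, 1 ≤ v k) (k : ℕ) :
    1 ≤ extd n v k := by
  unfold extd; split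
  · exact hv _
  · exact le_refl 1

private lemma extd_snoc_le (n : ℕ) (u : Fin (n + 1) → ℕ) (j : ℕ) (k : ℕ) (hk : k ≤ n) :
    extd (n + 1) (Fin.snoc u j) k = extd n u k := by
  have h1 : k < n + 2 := by omega
  have h2 : k < n + 1 := by omega
  rw [extd_lt _ _ _ h1, extd_lt _ _ _ h2]
  have : (⟨k, h1⟩ : Fin (n + 2)) = Fin.castSucc ⟨k, h2⟩ := by
    apply Fin.ext; simp
  rw [this, Fin.snoc_castSucc]

private lemma extd_snoc_last (n : ℕ) (u : Fin (n + 1) → ℕ) (j : ℕ) :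
    extd (n + 1) (Fin.snoc u j) (n + 1) = j := by
  rw [extd_lt _ _ _ (by omega)]
  have : (⟨n + 1, by omega⟩ : Fin (n + 2)) = Fin.last (n + 1) := by
    apply Fin.ext; simp
  rw [this, Fin.snoc_last]

private lemma extd_self_last (n : ℕ) (u : Fin (n + 1) → ℕ) :
    extd n u n = u (Fin.last n) := by
  rw [extd_lt _ _ _ (by omega)]
  congr 1

private lemma Rpath_snoc (P : ℕ → ℕ → ℝ) (q β : ℝ) (n : ℕ) (u : Fin (n + 1) → ℕ) (j : ℕ) :
    Rpath P q β (n + 1) (extd (n + 1) (Fin.snoc u j)) =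
      Rpath P q β n (extd n u) * Qker P q β (u (Fin.last n)) j := by
  unfold Rpath
  rw [Finset.prod_range_succ]
  rw [extd_snoc_le n u j 0 (by omega)]
  have hprod : ∏ k ∈ Finset.range n,
      Qker P q β (extd (n + 1) (Fin.snoc u j) k) (extd (n + 1) (Fin.snoc u j) (k + 1)) =
      ∏ k ∈ Finset.range n, Qker P q β (extd n u k) (extd n u (k + 1)) := by
    refine Finset.prod_congr rfl fun k hk => ?_
    have hk' := Finset.mem_range.mp hk
    rw [extd_snoc_le n u j k (by omega), extd_snoc_le n u j (k + 1) (by omega)]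
  have hlast : Qker P q β (extd (n + 1) (Fin.snoc u j) n) (extd (n + 1) (Fin.snoc u j) (n + 1)) =
      Qker P q β (u (Fin.last n)) j := by
    rw [extd_snoc_le n u j n le_rfl, extd_snoc_last, extd_self_last]
  rw [hprod, hlast, mul_assoc]

/- Setup: Galton-Watson offspring law `p` with generating function `f` (with derivative
functions `f'`, `f''` given by the differentiated power series, so that `f' q` and `f'' q`
are the left limits `f'(1-)`, `f''(1-)` when `q = 1`), extinction probability `q` (the
smallest root of `f(s) = s` in `(0,1]`), `β = f'(q)`, `b_q = q·f''(q)` (finite),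
`γ_q = b_q/(β(1-β))`; `P i j` is the coefficient of `z^j` in `f(z)^i`, and `(W n)` is the
Q-process started from one particle on a probability space `(Ω, μ)`, with total progeny
`S n = W 0 + ⋯ + W (n-1)`. -/
theorem expected_Q_process
    (p : ℕ → ℝ) (hp_nn : ∀ k, 0 ≤ p k) (hp_sum : ∑' k, p k = 1)
    (hp0 : 0 < p 0) (hp01 : p 0 + p 1 < 1)
    (f f' f'' : ℝ → ℝ)
    (hf : ∀ s, f s = ∑' k, p k * s ^ k)
    (hf' : ∀ s, f' s = ∑' k : ℕ, ((k : ℝ) + 1) * p (k + 1) * s ^ k)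
    (hf'' : ∀ s, f'' s = ∑' k : ℕ, ((k : ℝ) + 2) * ((k : ℝ) + 1) * p (k + 2) * s ^ k)
    (hm : Summable fun k : ℕ => (k : ℝ) * p k)
    (q : ℝ) (hq_mem : q ∈ Set.Ioc (0 : ℝ) 1) (hq_fix : f q = q)
    (hq_min : ∀ t ∈ Set.Ioc (0 : ℝ) 1, f t = t → q ≤ t)
    (β : ℝ) (hβ : β = f' q) (hβ_pos : 0 < β) (hβ_lt : β < 1)
    (bq : ℝ) (hbq : bq = q * f'' q)
    (hbq_fin : Summable fun k : ℕ => ((k : ℝ) + 2) * ((k : ℝ) + 1) * p (k + 2) * q ^ k)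
    (γq : ℝ) (hγq : γq = bq / (β * (1 - β)))
    (P : ℕ → ℕ → ℝ) (hP_nn : ∀ i j, 0 ≤ P i j)
    (hP : ∀ i : ℕ, ∀ s ∈ Set.Ico (0 : ℝ) 1, (f s) ^ i = ∑' j, P i j * s ^ j)
    (Ω : Type*) [MeasurableSpace Ω] (μ : Measure Ω) [IsProbabilityMeasure μ]
    (W : ℕ → Ω → ℕ) (hW_meas : ∀ n, Measurable (W n))
    (hW_pos : ∀ n ω, 1 ≤ W n ω)
    (hW_fdd : ∀ n : ℕ, ∀ i : ℕ → ℕ, (∀ k, k ≤ n → 1 ≤ i k) →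
      μ {ω | ∀ k, k ≤ n → W k ω = i k} =
        ENNReal.ofReal ((if i 0 = 1 then (1 : ℝ) else 0) *
          ∏ k ∈ Finset.range n,
            (i (k + 1) : ℝ) * q ^ ((i (k + 1) : ℤ) - (i k : ℤ)) / ((i k : ℝ) * β)
              * P (i k) (i (k + 1)))) :
    ∀ n : ℕ, ∫ ω, (W n ω : ℝ) ∂μ = 1 + γq * (1 - β ^ n) := by
  have hq0 : 0 < q := hq_mem.1
  have hq1 : q ≤ 1 := hq_mem.2
  -- summability facts for p at q
  have Sp : Summable p := by
    by_contra h
    rw [tsum_eq_zero_of_not_summable h] at hp_sum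
    norm_num at hp_sum
  have S0 : Summable fun k : ℕ => p k * q ^ k := by
    refine Sp.of_nonneg_of_le (fun k => mul_nonneg (hp_nn k) (pow_nonneg hq0.le k)) fun k => ?_
    calc p k * q ^ k ≤ p k * 1 :=
          mul_le_mul_of_nonneg_left (pow_le_one₀ hq0.le hq1) (hp_nn k)
      _ = p k := mul_one _
  have T0 : ∑' k : ℕ, p k * q ^ k = q := by rw [← hf q]; exact hq_fix
  have S1 : Summable fun k : ℕ => (k : ℝ) * (p k * q ^ k) := by
    refine hm.of_nonneg_of_le (fun k => mul_nonneg (Nat.cast_nonneg k)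
      (mul_nonneg (hp_nn k) (pow_nonneg hq0.le k))) fun k => ?_
    calc (k : ℝ) * (p k * q ^ k) ≤ (k : ℝ) * (p k * 1) := by
          apply mul_le_mul_of_nonneg_left _ (Nat.cast_nonneg k)
          exact mul_le_mul_of_nonneg_left (pow_le_one₀ hq0.le hq1) (hp_nn k)
      _ = (k : ℝ) * p k := by ring
  have T1 : ∑' k : ℕ, (k : ℝ) * (p k * q ^ k) = β * q := by
    rw [Summable.tsum_eq_zero_add S1]
    have h0 : ((0 : ℕ) : ℝ) * (p 0 * q ^ 0) = 0 := by simp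
    rw [h0, zero_add]
    have he : ∀ j : ℕ, ((j + 1 : ℕ) : ℝ) * (p (j + 1) * q ^ (j + 1)) =
        q * (((j : ℝ) + 1) * p (j + 1) * q ^ j) := fun j => by push_cast; ring
    rw [tsum_congr he, tsum_mul_left, ← hf' q, ← hβ, mul_comm]
  have Sg : Summable fun k : ℕ => ((k : ℝ) * ((k : ℝ) - 1)) * (p k * q ^ k) := by
    apply (summable_nat_add_iff 2).1
    exact (hbq_fin.mul_left (q ^ 2)).congr fun j => by push_cast; ring
  have Tg : ∑' k : ℕ, ((k : ℝ) * ((k : ℝ) - 1)) * (p k * q ^ k) = q * bq := by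
    have Sg' : Summable fun k : ℕ =>
        (((k + 1 : ℕ) : ℝ) * (((k + 1 : ℕ) : ℝ) - 1)) * (p (k + 1) * q ^ (k + 1)) :=
      (summable_nat_add_iff 1).2 Sg
    rw [Summable.tsum_eq_zero_add Sg, Summable.tsum_eq_zero_add Sg']
    have h0 : (((0 : ℕ) : ℝ) * (((0 : ℕ) : ℝ) - 1)) * (p 0 * q ^ 0) = 0 := by simp
    have h1 : (((0 + 1 : ℕ) : ℝ) * (((0 + 1 : ℕ) : ℝ) - 1)) * (p (0 + 1) * q ^ (0 + 1)) = 0 := by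
      norm_num
    rw [h0, h1, zero_add, zero_add]
    have he : ∀ j : ℕ,
        (((j + 1 + 1 : ℕ) : ℝ) * (((j + 1 + 1 : ℕ) : ℝ) - 1)) * (p (j + 1 + 1) * q ^ (j + 1 + 1)) =
        q ^ 2 * (((j : ℝ) + 2) * ((j : ℝ) + 1) * p (j + 2) * q ^ j) := fun j => by push_cast; ring
    rw [tsum_congr he, tsum_mul_left, ← hf'' q, hbq]
    ring
  have S2 : Summable fun k : ℕ => (k : ℝ) ^ 2 * (p k * q ^ k) :=
    (Sg.add S1).congr fun k => by ring
  have T2 : ∑' k : ℕ, (k : ℝ) ^ 2 * (p k * q ^ k) = q * bq + q * β := by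
    have he : ∀ k : ℕ, (k : ℝ) ^ 2 * (p k * q ^ k) =
        ((k : ℝ) * ((k : ℝ) - 1)) * (p k * q ^ k) + (k : ℝ) * (p k * q ^ k) := fun k => by ring
    rw [tsum_congr he, Summable.tsum_add Sg S1, Tg, T1]
    ring
  have M := convPow_moments p q β bq hp_nn hq0.le S0 S1 S2 T0 T1 T2
  -- identification of P with the convolution powers
  have hPid : ∀ i : ℕ, ∀ j : ℕ, P i j = convPow p i j := by
    intro i
    have hsa : ∀ s : ℝ, s ∈ Set.Ioo (0 : ℝ) 1 → Summable fun j => P i j * s ^ j := by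
      intro s hs
      by_contra hcon
      have h0 : ∑' j : ℕ, P i j * s ^ j = 0 := tsum_eq_zero_of_not_summable hcon
      have hform := hP i s ⟨hs.1.le, hs.2⟩
      rw [h0] at hform
      have hps : Summable fun k : ℕ => p k * s ^ k := by
        refine Sp.of_nonneg_of_le (fun k => mul_nonneg (hp_nn k) (pow_nonneg hs.1.le k))
          fun k => ?_
        calc p k * s ^ k ≤ p k * 1 :=
              mul_le_mul_of_nonneg_left (pow_le_one₀ hs.1.le hs.2.le) (hp_nn k)
          _ = p k := mul_one _
      have hfs : 0 < f s := by
        rw [hf s]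
        have hle : p 0 * s ^ 0 ≤ ∑' k : ℕ, p k * s ^ k :=
          Summable.le_tsum hps 0 fun k _ => mul_nonneg (hp_nn k) (pow_nonneg hs.1.le k)
        simp only [pow_zero, mul_one] at hle
        linarith
      exact absurd hform (ne_of_gt (pow_pos hfs i))
    have hcv := convPow_tsum_pow p hp_nn Sp i
    have hsb : ∀ s : ℝ, s ∈ Set.Ioo (0 : ℝ) 1 → Summable fun j => convPow p i j * s ^ j :=
      fun s hs => (hcv s hs).1
    have heq : ∀ s ∈ Set.Ioo (0 : ℝ) 1,
        ∑' j : ℕ, P i j * s ^ j = ∑' j : ℕ, convPow p i j * s ^ j := by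
      intro s hs
      rw [(hcv s hs).2, ← hf s, ← hP i s ⟨hs.1.le, hs.2⟩]
    exact coeff_unique (fun j => hP_nn i j) (fun j => convPow_nonneg hp_nn i j) hsa hsb heq
  -- key analytic fact
  have key : ∀ i : ℕ, 1 ≤ i →
      Summable (fun j : ℕ => (j : ℝ) * Qker P q β i j) ∧
      ∑' j : ℕ, (j : ℝ) * Qker P q β i j = β * i + (1 - β + bq / β) := by
    intro i hi
    obtain ⟨⟨_, _, s2⟩, _, _, t2⟩ := M i
    have hiR : (0 : ℝ) < (i : ℝ) := by exact_mod_cast hi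
    have hine : (i : ℝ) ≠ 0 := ne_of_gt hiR
    have hβne : β ≠ 0 := ne_of_gt hβ_pos
    have hqine : q ^ i ≠ 0 := ne_of_gt (pow_pos hq0 i)
    have hterm : ∀ j : ℕ, (j : ℝ) * Qker P q β i j =
        (q ^ i * (i : ℝ) * β)⁻¹ * ((j : ℝ) ^ 2 * (convPow p i j * q ^ j)) := by
      intro j
      unfold Qker
      rw [hPid i j, zpow_sub₀ (ne_of_gt hq0), zpow_natCast, zpow_natCast]
      field_simp
    constructor
    · exact (s2.mul_left ((q ^ i * (i : ℝ) * β)⁻¹)).congr fun j => (hterm j).symm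
    · rw [tsum_congr hterm, tsum_mul_left, t2]
      field_simp
      ring
  have hbq0 : 0 ≤ bq := by
    rw [hbq, hf'']
    refine mul_nonneg hq0.le (tsum_nonneg fun k => ?_)
    have : (0:ℝ) ≤ ((k : ℝ) + 2) * ((k : ℝ) + 1) := by positivity
    exact mul_nonneg (mul_nonneg this (hp_nn _)) (pow_nonneg hq0.le k)
  set c : ℝ := 1 - β + bq / β with hc
  have hc0 : 0 ≤ c := by
    have : 0 ≤ bq / β := div_nonneg hbq0 hβ_pos.le
    rw [hc]; linarith
  -- the path map and its basic properties
  have hmeasT : ∀ n : ℕ, Measurable (fun ω => (fun k : Fin (n + 1) => W k.1 ω)) :=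
    fun n => measurable_pi_lambda _ fun k => hW_meas k.1
  have hmarg : ∀ n : ℕ, ∀ g : ℕ → ℝ≥0∞,
      ∫⁻ ω, g (W n ω) ∂μ = ∑' v : Fin (n + 1) → ℕ,
        g (v (Fin.last n)) * μ ((fun ω => (fun k : Fin (n + 1) => W k.1 ω)) ⁻¹' {v}) := by
    intro n g
    have hg : Measurable (fun v : Fin (n + 1) → ℕ => g (v (Fin.last n))) :=
      Measurable.comp Measurable.of_discrete (measurable_pi_apply _)
    calc ∫⁻ ω, g (W n ω) ∂μ
        = ∫⁻ ω, (fun v : Fin (n + 1) → ℕ => g (v (Fin.last n)))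
            ((fun ω => (fun k : Fin (n + 1) => W k.1 ω)) ω) ∂μ := rfl
      _ = ∫⁻ v, g (v (Fin.last n)) ∂(μ.map (fun ω => (fun k : Fin (n + 1) => W k.1 ω))) :=
          (lintegral_map hg (hmeasT n)).symm
      _ = ∑' v : Fin (n + 1) → ℕ, g (v (Fin.last n)) *
            (μ.map (fun ω => (fun k : Fin (n + 1) => W k.1 ω))) {v} :=
          lintegral_countable' _
      _ = _ := by
          refine tsum_congr fun v => ?_
          rw [Measure.map_apply (hmeasT n) (measurableSet_singleton v)]
  have hpre_zero : ∀ n : ℕ, ∀ v : Fin (n + 1) → ℕ, (∃ k, v k = 0) →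
      ((fun ω => (fun k : Fin (n + 1) => W k.1 ω)) ⁻¹' {v} : Set Ω) = ∅ := by
    intro n v ⟨k0, hk0⟩
    rw [Set.eq_empty_iff_forall_notMem]
    intro ω hω
    simp only [Set.mem_preimage, Set.mem_singleton_iff, funext_iff] at hω
    have h2 := hω k0
    have h3 := hW_pos k0.1 ω
    rw [hk0] at h2
    omega
  have hpre_measure : ∀ n : ℕ, ∀ v : Fin (n + 1) → ℕ, (∀ k, 1 ≤ v k) →
      μ ((fun ω => (fun k : Fin (n + 1) => W k.1 ω)) ⁻¹' {v}) =
        ENNReal.ofReal (Rpath P q β n (extd n v)) := by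
    intro n v hv
    have hset : {ω | ∀ k, k ≤ n → W k ω = extd n v k} =
        ((fun ω => (fun k : Fin (n + 1) => W k.1 ω)) ⁻¹' {v} : Set Ω) := by
      ext ω
      simp only [Set.mem_setOf_eq, Set.mem_preimage, Set.mem_singleton_iff, funext_iff]
      constructor
      · intro h k
        have := h k.1 (Nat.lt_succ_iff.mp k.2)
        rwa [extd_lt n v k.1 k.2, Fin.eta] at this
      · intro h k hk
        have hk' : k < n + 1 := Nat.lt_succ_iff.mpr hk
        rw [extd_lt n v k hk']
        exact h ⟨k, hk'⟩
    rw [← hset]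
    exact hW_fdd n (extd n v) (fun k _ => extd_one_le n v hv k)
  -- the inner sum over the last coordinate
  have hinner : ∀ n : ℕ, ∀ u : Fin (n + 1) → ℕ,
      ∑' j : ℕ, (j : ℝ≥0∞) *
          μ ((fun ω => (fun k : Fin (n + 2) => W k.1 ω)) ⁻¹' {Fin.snoc u j}) =
        (ENNReal.ofReal β * (u (Fin.last n) : ℝ≥0∞) + ENNReal.ofReal c) *
          μ ((fun ω => (fun k : Fin (n + 1) => W k.1 ω)) ⁻¹' {u}) := by
    intro n u
    by_cases hu : ∀ k, 1 ≤ u k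
    · have hulast : 1 ≤ u (Fin.last n) := hu _
      obtain ⟨ksum, kval⟩ := key (u (Fin.last n)) hulast
      have hRnn : 0 ≤ Rpath P q β n (extd n u) := Rpath_nonneg hP_nn hq0.le hβ_pos.le _ _
      have hterm : ∀ j : ℕ, (j : ℝ≥0∞) *
          μ ((fun ω => (fun k : Fin (n + 2) => W k.1 ω)) ⁻¹' {Fin.snoc u j}) =
          ENNReal.ofReal ((j : ℝ) * (Rpath P q β n (extd n u) * Qker P q β (u (Fin.last n)) j)) := by
        intro j
        rcases Nat.eq_zero_or_pos j with hj | hj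
        · subst hj
          simp
        · have hv1 : ∀ k : Fin (n + 2), 1 ≤ (Fin.snoc u j : Fin (n + 2) → ℕ) k := by
            intro k
            induction k using Fin.lastCases with
            | last => rw [Fin.snoc_last]; exact hj
            | cast k => rw [Fin.snoc_castSucc]; exact hu k
          rw [hpre_measure (n + 1) (Fin.snoc u j) hv1, Rpath_snoc,
            ← ENNReal.ofReal_natCast j, ← ENNReal.ofReal_mul (Nat.cast_nonneg j)]
      rw [tsum_congr hterm]
      have hsum2 : Summable (fun j : ℕ =>
          (j : ℝ) * (Rpath P q β n (extd n u) * Qker P q β (u (Fin.last n)) j)) := by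
        refine (ksum.mul_left (Rpath P q β n (extd n u))).congr fun j => ?_
        ring
      have hnn2 : ∀ j : ℕ, 0 ≤ (j : ℝ) * (Rpath P q β n (extd n u) * Qker P q β (u (Fin.last n)) j) :=
        fun j => mul_nonneg (Nat.cast_nonneg j)
          (mul_nonneg hRnn (Qker_nonneg hP_nn hq0.le hβ_pos.le _ _))
      rw [← ENNReal.ofReal_tsum_of_nonneg hnn2 hsum2]
      have htsum_val : ∑' j : ℕ, (j : ℝ) * (Rpath P q β n (extd n u) * Qker P q β (u (Fin.last n)) j)
          = Rpath P q β n (extd n u) * (β * (u (Fin.last n) : ℝ) + c) := by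
        have : ∀ j : ℕ, (j : ℝ) * (Rpath P q β n (extd n u) * Qker P q β (u (Fin.last n)) j)
            = Rpath P q β n (extd n u) * ((j : ℝ) * Qker P q β (u (Fin.last n)) j) := fun j => by ring
        rw [tsum_congr this, tsum_mul_left, kval]
      rw [htsum_val, ENNReal.ofReal_mul hRnn, hpre_measure n u hu, mul_comm]
      congr 1
      rw [ENNReal.ofReal_add (mul_nonneg hβ_pos.le (Nat.cast_nonneg _)) hc0,
        ENNReal.ofReal_mul hβ_pos.le, ENNReal.ofReal_natCast]
    · push_neg at hu
      obtain ⟨k0, hk0⟩ := hu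
      have hk0' : u k0 = 0 := by omega
      have h1 : μ ((fun ω => (fun k : Fin (n + 1) => W k.1 ω)) ⁻¹' {u}) = 0 := by
        rw [hpre_zero n u ⟨k0, hk0'⟩]; exact measure_empty
      have h2 : ∀ j : ℕ,
          μ ((fun ω => (fun k : Fin (n + 2) => W k.1 ω)) ⁻¹' {Fin.snoc u j}) = 0 := by
        intro j
        rw [hpre_zero (n + 1) (Fin.snoc u j) ⟨Fin.castSucc k0, by rw [Fin.snoc_castSucc]; exact hk0'⟩]
        exact measure_empty
      simp [h1, h2]
  -- the recursion for the lintegral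
  have hstep : ∀ n : ℕ, ∫⁻ ω, (W (n + 1) ω : ℝ≥0∞) ∂μ =
      ENNReal.ofReal β * ∫⁻ ω, (W n ω : ℝ≥0∞) ∂μ + ENNReal.ofReal c := by
    intro n
    have h1 := hmarg (n + 1) (fun m => (m : ℝ≥0∞))
    have h2 := hmarg n (fun m => (m : ℝ≥0∞))
    have h3 := hmarg n (fun _ => (1 : ℝ≥0∞))
    have htot : ∑' u : Fin (n + 1) → ℕ,
        μ ((fun ω => (fun k : Fin (n + 1) => W k.1 ω)) ⁻¹' {u}) = 1 := by
      have : ∫⁻ _, (1 : ℝ≥0∞) ∂μ = 1 := by simp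
      rw [this] at h3
      simpa using h3.symm
    rw [h1, h2]
    calc ∑' v : Fin (n + 2) → ℕ, (v (Fin.last (n + 1)) : ℝ≥0∞) *
            μ ((fun ω => (fun k : Fin (n + 2) => W k.1 ω)) ⁻¹' {v})
        = ∑' x : ℕ × (Fin (n + 1) → ℕ), ((Fin.snocEquiv (fun _ => ℕ)) x (Fin.last (n + 1)) : ℝ≥0∞) *
            μ ((fun ω => (fun k : Fin (n + 2) => W k.1 ω)) ⁻¹' {(Fin.snocEquiv (fun _ => ℕ)) x}) :=
          (Equiv.tsum_eq (Fin.snocEquiv (fun _ => ℕ)) _).symm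
      _ = ∑' j : ℕ, ∑' u : Fin (n + 1) → ℕ, (j : ℝ≥0∞) *
            μ ((fun ω => (fun k : Fin (n + 2) => W k.1 ω)) ⁻¹' {Fin.snoc u j}) := by
          rw [← ENNReal.tsum_prod]
          refine tsum_congr fun x => ?_
          have he : (Fin.snocEquiv (fun _ => ℕ)) x = Fin.snoc x.2 x.1 := rfl
          rw [he, Fin.snoc_last]
      _ = ∑' u : Fin (n + 1) → ℕ, ∑' j : ℕ, (j : ℝ≥0∞) *
            μ ((fun ω => (fun k : Fin (n + 2) => W k.1 ω)) ⁻¹' {Fin.snoc u j}) :=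
          ENNReal.tsum_comm
      _ = ∑' u : Fin (n + 1) → ℕ, (ENNReal.ofReal β * (u (Fin.last n) : ℝ≥0∞) + ENNReal.ofReal c) *
            μ ((fun ω => (fun k : Fin (n + 1) => W k.1 ω)) ⁻¹' {u}) :=
          tsum_congr fun u => hinner n u
      _ = ENNReal.ofReal β * (∑' u : Fin (n + 1) → ℕ, (u (Fin.last n) : ℝ≥0∞) *
            μ ((fun ω => (fun k : Fin (n + 1) => W k.1 ω)) ⁻¹' {u})) + ENNReal.ofReal c := by
          have : ∀ u : Fin (n + 1) → ℕ,
              (ENNReal.ofReal β * (u (Fin.last n) : ℝ≥0∞) + ENNReal.ofReal c) *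
                μ ((fun ω => (fun k : Fin (n + 1) => W k.1 ω)) ⁻¹' {u}) =
              ENNReal.ofReal β * ((u (Fin.last n) : ℝ≥0∞) *
                μ ((fun ω => (fun k : Fin (n + 1) => W k.1 ω)) ⁻¹' {u})) +
              ENNReal.ofReal c * μ ((fun ω => (fun k : Fin (n + 1) => W k.1 ω)) ⁻¹' {u}) := by
            intro u; ring
          rw [tsum_congr this, ENNReal.tsum_add, ENNReal.tsum_mul_left, ENNReal.tsum_mul_left,
            htot, mul_one]
  -- the closed formula for the lintegral
  have hγ0 : 0 ≤ γq := by
    rw [hγq]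
    exact div_nonneg hbq0 (mul_nonneg hβ_pos.le (by linarith))
  have hX : ∀ n : ℕ, 0 ≤ 1 + γq * (1 - β ^ n) := by
    intro n
    have h1 : β ^ n ≤ 1 := pow_le_one₀ hβ_pos.le hβ_lt.le
    nlinarith
  have hlint : ∀ n : ℕ, ∫⁻ ω, (W n ω : ℝ≥0∞) ∂μ = ENNReal.ofReal (1 + γq * (1 - β ^ n)) := by
    intro n
    induction n with
    | zero =>
      have hone : μ {ω | W 0 ω = 1} = 1 := by
        have hset : {ω | ∀ k, k ≤ 0 → W k ω = (fun _ => 1 : ℕ → ℕ) k} = {ω | W 0 ω = 1} := by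
          ext ω
          simp only [Set.mem_setOf_eq]
          constructor
          · intro h; exact h 0 le_rfl
          · intro h k hk; rw [Nat.le_zero.mp hk]; exact h
        have := hW_fdd 0 (fun _ => 1) (fun k _ => le_rfl)
        rw [hset] at this
        simpa using this
      have hae : ∀ᵐ ω ∂μ, W 0 ω = 1 := by
        rw [ae_iff]
        have hcompl : {ω | ¬ W 0 ω = 1} = {ω | W 0 ω = 1}ᶜ := rfl
        have hms : MeasurableSet {ω | W 0 ω = 1} := (hW_meas 0) (measurableSet_singleton 1)
        rw [hcompl, prob_compl_eq_zero_iff hms]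
        exact hone
      have : ∫⁻ ω, (W 0 ω : ℝ≥0∞) ∂μ = ∫⁻ _, (1 : ℝ≥0∞) ∂μ := by
        refine lintegral_congr_ae (hae.mono fun ω h => ?_)
        simp [h]
      rw [this]
      simp
    | succ n ih =>
      rw [hstep n, ih, ← ENNReal.ofReal_mul hβ_pos.le,
        ← ENNReal.ofReal_add (mul_nonneg hβ_pos.le (hX n)) hc0]
      congr 1
      rw [hγq, hc]
      have hβne : β ≠ 0 := ne_of_gt hβ_pos
      have h1β : 1 - β ≠ 0 := sub_ne_zero_of_ne (ne_of_gt hβ_lt)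
      field_simp
      ring
  -- conclude for the Bochner integral
  intro n
  have hmeasR : Measurable (fun ω => (W n ω : ℝ)) :=
    Measurable.comp Measurable.of_discrete (hW_meas n)
  rw [integral_eq_lintegral_of_nonneg_ae
    (Filter.Eventually.of_forall fun ω => by positivity) hmeasR.aestronglyMeasurable]
  have : ∀ ω, ENNReal.ofReal ((W n ω : ℝ)) = (W n ω : ℝ≥0∞) := fun ω => ENNReal.ofReal_natCast _
  rw [lintegral_congr fun ω => this ω, hlint n, ENNReal.toReal_ofReal (hX n)]
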